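/- Let f be any gamble on X. Then: (i) for every closed interval I ∈ I_f there is at least one path ω with I ∈ I_f(ω); (ii) for every path ω, the set I_f(ω) is nonempty, since [min f, max f] ∈ I_f(ω); (iii) for every path ω, if I ∈ I_f(ω) and I ⊆ I' with I' ∈ I_f, then also I' ∈ I_f(ω). -/

import Mathlib

open Filter

/-- A coherent lower expectation on a nonempty finite sample space `X`. -/
def IsCoherent {X : Type} [Fintype X] [Nonempty X] (E : (X → ℝ) → ℝ) : Prop :=
  (∀ f : X → ℝ, Finset.univ.inf' Finset.univ_nonempty f ≤ E f) ∧
  (∀ (f : X → ℝ) (α : ℝ), 0 ≤ α → E (fun x => α * f x) = α * E f) ∧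
  (∀ f g : X → ℝ, E f + E g ≤ E (fun x => f x + g x))

/-- The conjugate upper expectation. -/
noncomputable def upperE {X : Type} (E : (X → ℝ) → ℝ) (f : X → ℝ) : ℝ :=
  -E (fun x => -f x)

/-- The process difference `ΔF(s)(x) = F(sx) − F(s)`. -/
noncomputable def procDiff {X : Type} (F : List X → ℝ) (s : List X) : X → ℝ :=
  fun x => F (s ++ [x]) - F s

/-- `M` is a supermartingale for the forecasting system `Φ`. -/
def IsSupermartingale {X : Type} (Φ : List X → (X → ℝ) → ℝ) (M : List X → ℝ) : Prop :=
  ∀ s : List X, upperE (Φ s) (procDiff M s) ≤ 0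

/-- A real process is computable if some recursive net of rationals converges
effectively to it. -/
def ComputableProcess {X : Type} [Primcodable X] (F : List X → ℝ) : Prop :=
  ∃ r : List X × ℕ → ℚ, Computable r ∧
    ∀ (s : List X) (n N : ℕ), N ≤ n → |(r (s, n) : ℝ) - F s| ≤ (2 : ℝ) ^ (-(N : ℤ))

/-- The length-`n` prefix `ω^n` of a path `ω`. -/
def prefixOf {X : Type} (ω : ℕ → X) (n : ℕ) : List X := (List.range n).map ω

/-- A path `ω` is computably random for the forecasting system `Φ` if every
computable nonnegative supermartingale for `Φ` is bounded above along `ω`. -/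
def ComputablyRandom {X : Type} [Fintype X] [Nonempty X] [Primcodable X]
    (Φ : List X → (X → ℝ) → ℝ) (ω : ℕ → X) : Prop :=
  ∀ M : List X → ℝ, ComputableProcess M → (∀ s, 0 ≤ M s) →
    IsSupermartingale Φ M → BddAbove (Set.range fun n => M (prefixOf ω n))

/-- A computable real number. -/
def ComputableReal (x : ℝ) : Prop :=
  ∃ r : ℕ → ℚ, Computable r ∧ ∀ n : ℕ, |(r n : ℝ) - x| ≤ (2 : ℝ) ^ (-(n : ℤ))

/-- A path `ω` is computably random for a gamble `f` and the closed interval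
`[a, b]` if there is a coherent lower expectation `E` for which `ω` is
computably random (w.r.t. the stationary forecasting system), with `E(f) = a`
and `Ē(f) = b`.  In other words, `[a, b] ∈ I_f(ω)`. -/
def RandomInterval {X : Type} [Fintype X] [Nonempty X] [Primcodable X]
    (f : X → ℝ) (a b : ℝ) (ω : ℕ → X) : Prop :=
  ∃ E : (X → ℝ) → ℝ, IsCoherent E ∧ ComputablyRandom (fun _ : List X => E) ω ∧
    E f = a ∧ upperE E f = b

section Aux

lemma computable_countable {α σ : Type} [Primcodable α] [Primcodable σ] :
    {f : α → σ | Computable f}.Countable := by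
  have key : ∀ f : {f : α → σ // Computable f},
      ∃ c : Nat.Partrec.Code, c.eval =
        fun n => ((Encodable.decode n : Option α) : Part α).bind
          fun a => Part.map Encodable.encode ((f.1 : α →. σ) a) :=
    fun f => Nat.Partrec.Code.exists_code.mp f.2
  have hinj : Function.Injective (fun f : {f : α → σ // Computable f} => (key f).choose) := by
    intro f g hfg
    have hf := (key f).choose_spec
    have hg := (key g).choose_spec
    simp only at hfg
    rw [hfg, hg] at hf
    have : f.1 = g.1 := by
      ext a
      have := congrFun hf (Encodable.encode a)
      simp [Encodable.encodek, PFun.coe_val] at this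
      exact this.symm
    exact Subtype.ext this
  have : Countable {f : α → σ // Computable f} :=
    (Function.Injective.comp (Encodable.encode_injective (α := Nat.Partrec.Code)) hinj).countable
  exact Set.countable_coe_iff.mp this

lemma eq_of_forall_dist_le' {x y : ℝ} (h : ∀ N : ℕ, |x - y| ≤ 2 * (2:ℝ)^(-(N:ℤ))) :
    x = y := by
  have h0 : Filter.Tendsto (fun N : ℕ => 2 * (2:ℝ)^(-(N:ℤ))) Filter.atTop (nhds 0) := by
    have : (fun N : ℕ => 2 * (2:ℝ)^(-(N:ℤ))) = fun N : ℕ => 2 * ((2:ℝ)⁻¹)^N := by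
      funext N
      rw [zpow_neg, zpow_natCast, inv_pow]
    rw [this]
    have := tendsto_pow_atTop_nhds_zero_of_lt_one (r := (2:ℝ)⁻¹) (by norm_num) (by norm_num)
    simpa using this.const_mul 2
  have h1 : |x - y| ≤ 0 := ge_of_tendsto h0 (Filter.Eventually.of_forall h)
  have h2 : |x - y| = 0 := le_antisymm h1 (abs_nonneg _)
  have := abs_eq_zero.mp h2
  linarith

variable {X : Type} [Fintype X] [Nonempty X]

lemma coh_zero {E : (X → ℝ) → ℝ} (hE : IsCoherent E) : E (fun _ => 0) = 0 := by
  have := hE.2.1 (fun _ => 0) 0 le_rfl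
  simpa using this

lemma coh_le_upper {E : (X → ℝ) → ℝ} (hE : IsCoherent E) (g : X → ℝ) :
    E g ≤ upperE E g := by
  have h := hE.2.2 g (fun x => -g x)
  simp only [add_neg_cancel] at h
  rw [coh_zero hE] at h
  unfold upperE; linarith

lemma coh_min_le {E : (X → ℝ) → ℝ} (hE : IsCoherent E) (g : X → ℝ) :
    ∃ x : X, g x ≤ upperE E g := by
  obtain ⟨x, -, hx⟩ := Finset.exists_mem_eq_inf' (Finset.univ_nonempty (α := X)) g
  refine ⟨x, ?_⟩
  calc g x = Finset.univ.inf' Finset.univ_nonempty g := hx.symm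
    _ ≤ E g := hE.1 g
    _ ≤ upperE E g := coh_le_upper hE g

lemma upperE_add {E : (X → ℝ) → ℝ} (hE : IsCoherent E) (g h : X → ℝ) :
    upperE E (fun x => g x + h x) ≤ upperE E g + upperE E h := by
  have := hE.2.2 (fun x => -g x) (fun x => -h x)
  unfold upperE
  have h2 : E (fun x => -(g x + h x)) = E (fun x => -g x + -h x) := by
    congr 1; funext x; ring
  rw [h2]; linarith

lemma upperE_smul {E : (X → ℝ) → ℝ} (hE : IsCoherent E) (g : X → ℝ) {c : ℝ} (hc : 0 ≤ c) :
    upperE E (fun x => c * g x) = c * upperE E g := by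
  unfold upperE
  have := hE.2.1 (fun x => -g x) c hc
  have h2 : E (fun x => -(c * g x)) = E (fun x => c * -g x) := by
    congr 1; funext x; ring
  rw [h2, this]; ring

lemma upperE_sum_nonpos {E : (X → ℝ) → ℝ} (hE : IsCoherent E) {ι : Type*} [DecidableEq ι]
    (s : Finset ι) (w : ι → ℝ) (g : ι → X → ℝ)
    (hw : ∀ i ∈ s, 0 ≤ w i) (hg : ∀ i ∈ s, upperE E (g i) ≤ 0) :
    upperE E (fun x => ∑ i ∈ s, w i * g i x) ≤ 0 := by
  induction s using Finset.induction with
  | empty => simp [upperE, coh_zero hE]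
  | insert a s hnotmem ih =>
    have h1 : (fun x => ∑ i ∈ insert a s, w i * g i x)
        = fun x => w a * g a x + ∑ i ∈ s, w i * g i x := by
      funext x; rw [Finset.sum_insert hnotmem]
    rw [h1]
    calc upperE E (fun x => w a * g a x + ∑ i ∈ s, w i * g i x)
        ≤ upperE E (fun x => w a * g a x) + upperE E (fun x => ∑ i ∈ s, w i * g i x) :=
          upperE_add hE _ _
      _ ≤ 0 := by
          have h3 : upperE E (fun x => w a * g a x) = w a * upperE E (g a) :=
            upperE_smul hE _ (hw a (Finset.mem_insert_self a s))
          have h4 := ih (fun i hi => hw i (Finset.mem_insert_of_mem hi))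
            (fun i hi => hg i (Finset.mem_insert_of_mem hi))
          have h5 : w a * upperE E (g a) ≤ 0 :=
            mul_nonpos_of_nonneg_of_nonpos (hw a (Finset.mem_insert_self a s))
              (hg a (Finset.mem_insert_self a s))
          linarith

noncomputable def gmin (f : X → ℝ) : ℝ := Finset.univ.inf' Finset.univ_nonempty f
noncomputable def gmax (f : X → ℝ) : ℝ := Finset.univ.sup' Finset.univ_nonempty f

noncomputable def argmin (f : X → ℝ) : X :=
  (Finset.exists_mem_eq_inf' (Finset.univ_nonempty (α := X)) f).choose
noncomputable def argmax (f : X → ℝ) : X :=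
  (Finset.exists_mem_eq_sup' (Finset.univ_nonempty (α := X)) f).choose

lemma argmin_spec (f : X → ℝ) : f (argmin f) = gmin f :=
  ((Finset.exists_mem_eq_inf' (Finset.univ_nonempty (α := X)) f).choose_spec.2).symm
lemma argmax_spec (f : X → ℝ) : f (argmax f) = gmax f :=
  ((Finset.exists_mem_eq_sup' (Finset.univ_nonempty (α := X)) f).choose_spec.2).symm

noncomputable def lam (f : X → ℝ) (c : ℝ) : ℝ :=
  if gmax f = gmin f then 1 else (gmax f - c) / (gmax f - gmin f)

noncomputable def linC (f : X → ℝ) (c : ℝ) : (X → ℝ) → ℝ :=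
  fun g => lam f c * g (argmin f) + (1 - lam f c) * g (argmax f)

lemma lam_mem (f : X → ℝ) {c : ℝ} (h1 : gmin f ≤ c) (h2 : c ≤ gmax f) :
    0 ≤ lam f c ∧ lam f c ≤ 1 := by
  unfold lam
  split_ifs with h
  · norm_num
  · have hlt : gmin f < gmax f := by
      rcases lt_or_eq_of_le (le_trans h1 h2 : gmin f ≤ gmax f) with h' | h'
      · exact h'
      · exact absurd h'.symm h
    constructor
    · apply div_nonneg <;> linarith
    · rw [div_le_one (by linarith)]; linarith

lemma linC_coherent (f : X → ℝ) {c : ℝ} (h1 : gmin f ≤ c) (h2 : c ≤ gmax f) :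
    IsCoherent (linC f c) := by
  obtain ⟨hl0, hl1⟩ := lam_mem f h1 h2
  refine ⟨fun g => ?_, fun g α hα => ?_, fun g h => ?_⟩
  · have a1 : Finset.univ.inf' Finset.univ_nonempty g ≤ g (argmin f) :=
      Finset.inf'_le _ (Finset.mem_univ _)
    have a2 : Finset.univ.inf' Finset.univ_nonempty g ≤ g (argmax f) :=
      Finset.inf'_le _ (Finset.mem_univ _)
    unfold linC
    nlinarith
  · unfold linC; ring
  · unfold linC; apply le_of_eq; ring

lemma linC_val (f : X → ℝ) {c : ℝ} (h1 : gmin f ≤ c) (h2 : c ≤ gmax f) :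
    linC f c f = c := by
  unfold linC lam
  rw [argmin_spec f, argmax_spec f]
  split_ifs with h
  · simp; linarith
  · have hlt : gmax f - gmin f ≠ 0 := by
      intro h'; exact h (by linarith)
    field_simp
    ring

lemma linC_upper_val (f : X → ℝ) {c : ℝ} (h1 : gmin f ≤ c) (h2 : c ≤ gmax f) :
    upperE (linC f c) f = c := by
  unfold upperE
  have : linC f c (fun x => -f x) = -(linC f c f) := by unfold linC; ring
  rw [this, linC_val f h1 h2, neg_neg]

lemma min_coherent {E F : (X → ℝ) → ℝ} (hE : IsCoherent E) (hF : IsCoherent F) :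
    IsCoherent (fun g => min (E g) (F g)) := by
  refine ⟨fun g => le_min (hE.1 g) (hF.1 g), fun g α hα => ?_, fun g h => ?_⟩
  · simp only [hE.2.1 g α hα, hF.2.1 g α hα]
    exact (mul_min_of_nonneg _ _ hα).symm
  · apply le_min
    · calc min (E g) (F g) + min (E h) (F h) ≤ E g + E h :=
          add_le_add (min_le_left _ _) (min_le_left _ _)
        _ ≤ E (fun x => g x + h x) := hE.2.2 g h
    · calc min (E g) (F g) + min (E h) (F h) ≤ F g + F h :=
          add_le_add (min_le_right _ _) (min_le_right _ _)
        _ ≤ F (fun x => g x + h x) := hF.2.2 g h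

lemma upperE_min (E F : (X → ℝ) → ℝ) (g : X → ℝ) :
    upperE (fun h => min (E h) (F h)) g = max (upperE E g) (upperE F g) := by
  unfold upperE
  simp only []
  rw [min_def]
  split_ifs with h
  · rw [max_def]
    split_ifs with h2
    · linarith
    · linarith
  · rw [max_def]
    split_ifs with h2
    · linarith
    · linarith

noncomputable def vac : (X → ℝ) → ℝ := fun g => gmin g

lemma vac_coherent : IsCoherent (vac (X := X)) := by
  refine ⟨fun g => le_rfl, fun g α hα => ?_, fun g h => ?_⟩
  · show gmin _ = α * gmin g
    obtain ⟨x0, -, hx0⟩ := Finset.exists_mem_eq_inf' (Finset.univ_nonempty (α := X)) g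
    apply le_antisymm
    · calc gmin (fun x => α * g x) ≤ α * g x0 := Finset.inf'_le _ (Finset.mem_univ x0)
        _ = α * gmin g := by rw [← hx0]; rfl
    · apply Finset.le_inf'
      intro x _
      have : gmin g ≤ g x := Finset.inf'_le _ (Finset.mem_univ x)
      exact mul_le_mul_of_nonneg_left this hα
  · show gmin g + gmin h ≤ gmin _
    apply Finset.le_inf'
    intro x _
    have h1 : gmin g ≤ g x := Finset.inf'_le _ (Finset.mem_univ x)
    have h2 : gmin h ≤ h x := Finset.inf'_le _ (Finset.mem_univ x)
    show gmin g + gmin h ≤ _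
    linarith

lemma vac_upper_val (f : X → ℝ) : upperE (vac (X := X)) f = gmax f := by
  unfold upperE vac
  apply le_antisymm
  · have h : ∀ x : X, -(gmax f) ≤ -f x := fun x =>
      neg_le_neg (Finset.le_sup' _ (Finset.mem_univ x))
    have h2 : -(gmax f) ≤ gmin (fun x => -f x) := Finset.le_inf' _ _ (fun x _ => h x)
    linarith
  · obtain ⟨x, -, hx⟩ := Finset.exists_mem_eq_sup' (Finset.univ_nonempty (α := X)) f
    have h2 : gmin (fun x => -f x) ≤ -f x := Finset.inf'_le _ (Finset.mem_univ x)
    have : gmax f = f x := hx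
    linarith

lemma vac_random [Primcodable X] (ω : ℕ → X) :
    ComputablyRandom (fun _ : List X => vac (X := X)) ω := by
  intro M _ _ hsm
  refine ⟨M [], ?_⟩
  rintro y ⟨n, rfl⟩
  have step : ∀ s : List X, ∀ x : X, M (s ++ [x]) ≤ M s := by
    intro s x
    have h := hsm s
    have h2 : gmin (fun y => -procDiff M s y) ≤ -procDiff M s x :=
      Finset.inf'_le _ (Finset.mem_univ x)
    have h3 : 0 ≤ gmin (fun y => -procDiff M s y) := by
      have h' : -(gmin (fun y => -procDiff M s y)) ≤ 0 := h
      linarith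
    have : procDiff M s x ≤ 0 := by linarith
    unfold procDiff at this; linarith
  have key : ∀ n, M (prefixOf ω n) ≤ M [] := by
    intro n
    induction n with
    | zero => simp [prefixOf]
    | succ n ih =>
      have hp : prefixOf ω (n+1) = prefixOf ω n ++ [ω n] := by
        unfold prefixOf; rw [List.range_succ, List.map_append]; rfl
      rw [hp]
      exact le_trans (step _ _) ih
  exact key n

lemma random_mono [Primcodable X] {E E' : (X → ℝ) → ℝ} (hle : ∀ g, E' g ≤ E g)
    (ω : ℕ → X) (h : ComputablyRandom (fun _ : List X => E) ω) :
    ComputablyRandom (fun _ : List X => E') ω := by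
  intro M hc hn hsm
  apply h M hc hn
  intro s
  have h1 := hsm s
  have h2 := hle (fun x => -procDiff M s x)
  have h3 : upperE E' (procDiff M s) ≤ 0 := h1
  unfold upperE at h3 ⊢
  linarith

end Aux

section Construction

variable {X : Type} [Fintype X] [Nonempty X]

noncomputable def wgt (Ms : ℕ → (List X → ℝ)) (l : List X) (k : ℕ) : ℝ :=
  (2:ℝ)^(-(k:ℤ)) / (1 + Ms k (l.take k))

noncomputable def gfun (Ms : ℕ → (List X → ℝ)) (l : List X) : X → ℝ :=
  fun x => ∑ k ∈ Finset.range (l.length + 1), wgt Ms l k * (Ms k (l ++ [x]) - Ms k l)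

noncomputable def nxt (Ms : ℕ → (List X → ℝ)) (l : List X) : X :=
  if h : ∃ x, gfun Ms l x ≤ 0 then h.choose else Classical.arbitrary X

noncomputable def pref (Ms : ℕ → (List X → ℝ)) : ℕ → List X
  | 0 => []
  | n+1 => pref Ms n ++ [nxt Ms (pref Ms n)]

noncomputable def thePath (Ms : ℕ → (List X → ℝ)) (n : ℕ) : X := nxt Ms (pref Ms n)

variable {Ms : ℕ → (List X → ℝ)} {E : (X → ℝ) → ℝ}

lemma length_pref (n : ℕ) : (pref Ms n).length = n := by
  induction n with
  | zero => rfl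
  | succ n ih => simp [pref, ih]

lemma prefixOf_thePath (n : ℕ) : prefixOf (thePath Ms) n = pref Ms n := by
  induction n with
  | zero => rfl
  | succ n ih =>
    have : prefixOf (thePath Ms) (n+1) = prefixOf (thePath Ms) n ++ [thePath Ms n] := by
      unfold prefixOf; rw [List.range_succ, List.map_append]; rfl
    rw [this, ih]
    rfl

lemma pref_take {k n : ℕ} (hkn : k ≤ n) : (pref Ms n).take k = pref Ms k := by
  induction n with
  | zero =>
    have hk0 : k = 0 := Nat.le_zero.mp hkn
    subst hk0; rfl
  | succ n ih =>
    rcases Nat.lt_or_ge k (n+1) with h | h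
    · have hk : k ≤ n := Nat.lt_succ_iff.mp h
      show (pref Ms n ++ [nxt Ms (pref Ms n)]).take k = pref Ms k
      rw [List.take_append_of_le_length (by rw [length_pref]; exact hk)]
      exact ih hk
    · have : k = n + 1 := le_antisymm hkn h
      subst this
      exact List.take_of_length_le (by rw [length_pref])

lemma wgt_pos (hMn : ∀ k s, 0 ≤ Ms k s) (l : List X) (k : ℕ) : 0 < wgt Ms l k := by
  unfold wgt
  apply div_pos (zpow_pos (by norm_num) _)
  have := hMn k (l.take k)
  linarith

lemma gfun_nxt_nonpos (hE : IsCoherent E) (hMn : ∀ k s, 0 ≤ Ms k s)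
    (hMs : ∀ k, IsSupermartingale (fun _ : List X => E) (Ms k)) (l : List X) :
    gfun Ms l (nxt Ms l) ≤ 0 := by
  have hex : ∃ x, gfun Ms l x ≤ 0 := by
    have hup : upperE E (gfun Ms l) ≤ 0 := by
      have heq : gfun Ms l = fun x => ∑ k ∈ Finset.range (l.length + 1),
          wgt Ms l k * procDiff (Ms k) l x := rfl
      rw [heq]
      exact upperE_sum_nonpos hE _ _ _
        (fun k _ => le_of_lt (wgt_pos hMn l k))
        (fun k _ => hMs k l)
    obtain ⟨x, hx⟩ := coh_min_le hE (gfun Ms l)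
    exact ⟨x, le_trans hx hup⟩
  unfold nxt
  rw [dif_pos hex]
  exact hex.choose_spec

/-- the Lyapunov quantity -/
noncomputable def Wq (Ms : ℕ → (List X → ℝ)) (n : ℕ) : ℝ :=
  ∑ k ∈ Finset.range (n+1), wgt Ms (pref Ms n) k * Ms k (pref Ms n)

lemma Wq_succ (hE : IsCoherent E) (hMn : ∀ k s, 0 ≤ Ms k s)
    (hMs : ∀ k, IsSupermartingale (fun _ : List X => E) (Ms k)) (n : ℕ) :
    Wq Ms (n+1) ≤ Wq Ms n + (2:ℝ)^(-(n+1:ℤ)) := by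
  have hpsucc : pref Ms (n+1) = pref Ms n ++ [nxt Ms (pref Ms n)] := rfl
  have hwgt_eq : ∀ k ∈ Finset.range (n+1), wgt Ms (pref Ms (n+1)) k = wgt Ms (pref Ms n) k := by
    intro k hk
    have hk' : k ≤ n := Nat.lt_succ_iff.mp (Finset.mem_range.mp hk)
    unfold wgt
    rw [pref_take (le_trans hk' (Nat.le_succ n)), pref_take hk']
  have hsplit : Wq Ms (n+1) =
      (∑ k ∈ Finset.range (n+1), wgt Ms (pref Ms n) k * Ms k (pref Ms (n+1)))
      + wgt Ms (pref Ms (n+1)) (n+1) * Ms (n+1) (pref Ms (n+1)) := by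
    unfold Wq
    rw [Finset.sum_range_succ]
    congr 1
    exact Finset.sum_congr rfl (fun k hk => by rw [hwgt_eq k hk])
  have hfirst : (∑ k ∈ Finset.range (n+1), wgt Ms (pref Ms n) k * Ms k (pref Ms (n+1)))
      ≤ Wq Ms n := by
    have hgf := gfun_nxt_nonpos hE hMn hMs (pref Ms n)
    have hexp : (∑ k ∈ Finset.range (n+1), wgt Ms (pref Ms n) k * Ms k (pref Ms (n+1)))
        = Wq Ms n + gfun Ms (pref Ms n) (nxt Ms (pref Ms n)) := by
      unfold Wq gfun
      rw [length_pref, ← Finset.sum_add_distrib]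
      apply Finset.sum_congr rfl
      intro k _
      rw [hpsucc]
      ring
    rw [hexp]
    linarith
  have hlast : wgt Ms (pref Ms (n+1)) (n+1) * Ms (n+1) (pref Ms (n+1)) ≤ (2:ℝ)^(-(n+1:ℤ)) := by
    have htake : (pref Ms (n+1)).take (n+1) = pref Ms (n+1) := pref_take le_rfl
    unfold wgt
    rw [htake]
    set t := Ms (n+1) (pref Ms (n+1)) with ht
    have htn : 0 ≤ t := hMn _ _
    have hd : (0:ℝ) < 1 + t := by linarith
    have hpow : (0:ℝ) < (2:ℝ)^(-(n+1:ℤ)) := zpow_pos (by norm_num) _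
    have hcast : (2:ℝ)^(-((n+1:ℕ):ℤ)) = (2:ℝ)^(-(n+1:ℤ)) := by norm_num
    rw [hcast, div_mul_eq_mul_div, div_le_iff₀ hd]
    nlinarith
  rw [hsplit]
  linarith

lemma Wq_le (hE : IsCoherent E) (hMn : ∀ k s, 0 ≤ Ms k s)
    (hMs : ∀ k, IsSupermartingale (fun _ : List X => E) (Ms k)) (n : ℕ) :
    Wq Ms n ≤ 2 - (2:ℝ)^(-(n:ℤ)) := by
  induction n with
  | zero =>
    unfold Wq wgt
    rw [zero_add, Finset.sum_range_one]
    set t := Ms 0 ((pref Ms 0).take 0) with ht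
    have htn : 0 ≤ t := hMn _ _
    have hd : (0:ℝ) < 1 + t := by linarith
    have h0 : ((0:ℕ):ℤ) = 0 := rfl
    rw [h0, neg_zero, zpow_zero]
    have hM0 : Ms 0 (pref Ms 0) = t := rfl
    rw [hM0, div_mul_eq_mul_div, div_le_iff₀ hd]
    nlinarith
  | succ n ih =>
    have h1 := Wq_succ hE hMn hMs n
    have h2 : (2:ℝ)^(-(n:ℤ)) = 2 * (2:ℝ)^(-(n+1:ℤ)) := by
      rw [show (-(n:ℤ)) = (-(n+1:ℤ)) + 1 by ring, zpow_add₀ (by norm_num : (2:ℝ) ≠ 0)]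
      ring
    have : (2:ℝ)^(-((n+1:ℕ):ℤ)) = (2:ℝ)^(-(n+1:ℤ)) := by norm_num
    rw [this]
    linarith

lemma Ms_bdd (hE : IsCoherent E) (hMn : ∀ k s, 0 ≤ Ms k s)
    (hMs : ∀ k, IsSupermartingale (fun _ : List X => E) (Ms k)) (k : ℕ) :
    BddAbove (Set.range fun n => Ms k (pref Ms n)) := by
  set t := Ms k (pref Ms k) with htdef
  have htn : 0 ≤ t := hMn _ _
  set B1 : ℝ := 2 * (2:ℝ)^(k:ℤ) * (1 + t) with hB1
  have hB1n : 0 ≤ B1 := by positivity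
  set B2 : ℝ := ∑ m ∈ Finset.range k, Ms k (pref Ms m) with hB2
  have hB2n : 0 ≤ B2 := Finset.sum_nonneg (fun m _ => hMn _ _)
  refine ⟨B1 + B2, ?_⟩
  rintro y ⟨n, rfl⟩
  rcases Nat.lt_or_ge n k with h | h
  · have h1 : Ms k (pref Ms n) ≤ B2 :=
      Finset.single_le_sum (f := fun m => Ms k (pref Ms m)) (fun m _ => hMn _ _)
        (Finset.mem_range.mpr h)
    linarith
  · -- k ≤ n
    have hterm : wgt Ms (pref Ms n) k * Ms k (pref Ms n) ≤ Wq Ms n := by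
      apply Finset.single_le_sum (f := fun j => wgt Ms (pref Ms n) j * Ms j (pref Ms n))
      · intro j _
        exact mul_nonneg (le_of_lt (wgt_pos hMn _ _)) (hMn _ _)
      · exact Finset.mem_range.mpr (Nat.lt_succ_of_le h)
    have hW : Wq Ms n ≤ 2 := by
      have := Wq_le hE hMn hMs n
      have hp : (0:ℝ) < (2:ℝ)^(-(n:ℤ)) := zpow_pos (by norm_num) _
      linarith
    have hwk : wgt Ms (pref Ms n) k = (2:ℝ)^(-(k:ℤ)) / (1 + t) := by
      unfold wgt
      rw [pref_take h]
    have hd : (0:ℝ) < 1 + t := by linarith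
    have hwpos : 0 < wgt Ms (pref Ms n) k := wgt_pos hMn _ _
    have hzz : (2:ℝ)^(-(k:ℤ)) * (2:ℝ)^((k:ℤ)) = 1 := by
      rw [← zpow_add₀ (by norm_num : (2:ℝ) ≠ 0)]
      norm_num
    have hkey : wgt Ms (pref Ms n) k * B1 = 2 := by
      rw [hwk, hB1]
      field_simp
      nlinarith [hzz]
    have h2 : wgt Ms (pref Ms n) k * Ms k (pref Ms n) ≤ wgt Ms (pref Ms n) k * B1 := by
      rw [hkey]; linarith
    have h3 : Ms k (pref Ms n) ≤ B1 := le_of_mul_le_mul_left h2 hwpos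
    linarith

lemma process_countable {Y : Type} [Primcodable Y] :
    {M : List Y → ℝ | ComputableProcess M}.Countable := by
  have hcc : Countable {r : List Y × ℕ → ℚ // Computable r} :=
    (computable_countable (α := List Y × ℕ) (σ := ℚ)).to_subtype
  have F : ∀ M : {M : List Y → ℝ // ComputableProcess M},
      ∃ r : List Y × ℕ → ℚ, Computable r ∧
        ∀ (s : List Y) (n N : ℕ), N ≤ n → |(r (s, n) : ℝ) - M.1 s| ≤ (2 : ℝ) ^ (-(N : ℤ)) :=
    fun M => M.2
  have hinj : Function.Injective
      (fun M : {M : List Y → ℝ // ComputableProcess M} =>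
        (⟨(F M).choose, (F M).choose_spec.1⟩ : {r : List Y × ℕ → ℚ // Computable r})) := by
    intro M M' hMM'
    have h1 := (F M).choose_spec.2
    have h2 := (F M').choose_spec.2
    have hr : (F M).choose = (F M').choose := congrArg Subtype.val hMM'
    apply Subtype.ext
    funext s
    apply eq_of_forall_dist_le'
    intro N
    have a1 := h1 s N N le_rfl
    have a2 := h2 s N N le_rfl
    rw [hr] at a1
    have b1 := abs_le.mp a1
    have b2 := abs_le.mp a2
    rw [abs_le]
    constructor <;> [linarith; linarith]
  have : Countable {M : List Y → ℝ // ComputableProcess M} := hinj.countable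
  exact Set.countable_coe_iff.mp this

lemma exists_random [Primcodable X] {E : (X → ℝ) → ℝ} (hE : IsCoherent E) :
    ∃ ω : ℕ → X, ComputablyRandom (fun _ : List X => E) ω := by
  classical
  set S : Set (List X → ℝ) :=
    {M | ComputableProcess M ∧ (∀ s, 0 ≤ M s) ∧
      IsSupermartingale (fun _ : List X => E) M} with hS
  have hSc : S.Countable := process_countable.mono (fun M hM => hM.1)
  have hSne : S.Nonempty := by
    refine ⟨fun _ => 0, ⟨⟨fun _ => 0, Computable.const 0, ?_⟩, fun s => le_rfl, ?_⟩⟩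
    · intro s n N _
      simp only [Rat.cast_zero, sub_zero, abs_zero]
      positivity
    · intro s
      show upperE E (procDiff (fun _ => (0:ℝ)) s) ≤ 0
      have hpd : (fun x : X => -(procDiff (fun _ : List X => (0:ℝ)) s x))
          = fun _ : X => (0:ℝ) := by
        funext x; simp [procDiff]
      unfold upperE
      rw [hpd, coh_zero hE]
      norm_num
  obtain ⟨Ms, hMsr⟩ := hSc.exists_eq_range hSne
  have hmem : ∀ k, Ms k ∈ S := by
    intro k; rw [hMsr]; exact Set.mem_range_self k
  have hMn : ∀ k s, 0 ≤ Ms k s := fun k => (hmem k).2.1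
  have hMs : ∀ k, IsSupermartingale (fun _ : List X => E) (Ms k) := fun k => (hmem k).2.2
  refine ⟨thePath Ms, ?_⟩
  intro M hc hn hsm
  have hMS : M ∈ S := ⟨hc, hn, hsm⟩
  rw [hMsr] at hMS
  obtain ⟨k, hk⟩ := hMS
  obtain ⟨B, hB⟩ := Ms_bdd hE hMn hMs k
  refine ⟨B, ?_⟩
  rintro y ⟨n, rfl⟩
  show M (prefixOf (thePath Ms) n) ≤ B
  rw [prefixOf_thePath, ← hk]
  exact hB ⟨n, rfl⟩


end Construction


/-- (i) every nonempty closed interval `[a,b] ⊆ [min f, max f]`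
belongs to `I_f(ω)` for at least one path `ω`; (ii) `I_f(ω)` is nonempty for
every path `ω`, since `[min f, max f] ∈ I_f(ω)`; (iii) `I_f(ω)` is increasing:
supersets (within `I_f`) of its members are members. -/



theorem stmt_9 {X : Type} [Fintype X] [Nonempty X] [Primcodable X]
    (f : X → ℝ) :
    (∀ a b : ℝ, a ≤ b → Finset.univ.inf' Finset.univ_nonempty f ≤ a →
      b ≤ Finset.univ.sup' Finset.univ_nonempty f →
      ∃ ω : ℕ → X, RandomInterval f a b ω) ∧
    (∀ ω : ℕ → X, RandomInterval f (Finset.univ.inf' Finset.univ_nonempty f)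
      (Finset.univ.sup' Finset.univ_nonempty f) ω) ∧
    (∀ (ω : ℕ → X) (a b a' b' : ℝ), RandomInterval f a b ω →
      a' ≤ a → b ≤ b' → a' ≤ b' →
      Finset.univ.inf' Finset.univ_nonempty f ≤ a' →
      b' ≤ Finset.univ.sup' Finset.univ_nonempty f →
      RandomInterval f a' b' ω) := by
  have hgm : gmin f = Finset.univ.inf' Finset.univ_nonempty f := rfl
  have hgM : gmax f = Finset.univ.sup' Finset.univ_nonempty f := rfl
  refine ⟨?_, ?_, ?_⟩
  · -- (i)
    intro a b hab hia hbs
    rw [← hgm] at hia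
    rw [← hgM] at hbs
    have ha2 : a ≤ gmax f := le_trans hab hbs
    have hb1 : gmin f ≤ b := le_trans hia hab
    set E' : (X → ℝ) → ℝ := fun g => min (linC f a g) (linC f b g) with hE'
    have hcoh : IsCoherent E' :=
      min_coherent (linC_coherent f hia ha2) (linC_coherent f hb1 hbs)
    obtain ⟨ω, hω⟩ := exists_random hcoh
    refine ⟨ω, E', hcoh, hω, ?_, ?_⟩
    · show min (linC f a f) (linC f b f) = a
      rw [linC_val f hia ha2, linC_val f hb1 hbs]
      exact min_eq_left hab
    · rw [hE', upperE_min, linC_upper_val f hia ha2, linC_upper_val f hb1 hbs]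
      exact max_eq_right hab
  · -- (ii)
    intro ω
    exact ⟨vac, vac_coherent, vac_random ω, rfl, vac_upper_val f⟩
  · -- (iii)
    rintro ω a b a' b' ⟨E, hE, hr, hEf, hEuf⟩ ha hb hab' hia' hbs'
    rw [← hgm] at hia'
    rw [← hgM] at hbs'
    have ha2 : a' ≤ gmax f := le_trans hab' hbs'
    have hb1 : gmin f ≤ b' := le_trans hia' hab'
    set G : (X → ℝ) → ℝ := fun g => min (linC f a' g) (linC f b' g) with hG
    have hGcoh : IsCoherent G :=
      min_coherent (linC_coherent f hia' ha2) (linC_coherent f hb1 hbs')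
    set E' : (X → ℝ) → ℝ := fun g => min (E g) (G g) with hE'
    have hcoh : IsCoherent E' := min_coherent hE hGcoh
    have hrand : ComputablyRandom (fun _ : List X => E') ω :=
      random_mono (fun g => min_le_left _ _) ω hr
    refine ⟨E', hcoh, hrand, ?_, ?_⟩
    · show min (E f) (min (linC f a' f) (linC f b' f)) = a'
      rw [hEf, linC_val f hia' ha2, linC_val f hb1 hbs']
      rw [min_eq_left hab']
      exact min_eq_right ha
    · rw [hE', upperE_min E G f, hG, upperE_min, hEuf,
        linC_upper_val f hia' ha2, linC_upper_val f hb1 hbs']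
      rw [max_eq_right hab']
      exact max_eq_right hb
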